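/- Let F be a free group on generators y_1, ..., y_{n-1}, and let K_{n-1} = F / ∏_{i=1}^{n-1} [⟨⟨y_i⟩⟩, ⟨⟨y_i⟩⟩], where ⟨⟨y_i⟩⟩ denotes the normal closure of y_i in F. Then γ^n(K_{n-1}) = {1}, i.e., K_{n-1} is nilpotent of class at most n-1. -/

import Mathlib

lemma key_nilpotent : ∀ (m : ℕ) (G : Type) [Group G] (f : Fin m → G),
    Subgroup.closure (Set.range f) = ⊤ →
    (∀ i : Fin m, ∀ a ∈ Subgroup.normalClosure ({f i} : Set G),
      ∀ b ∈ Subgroup.normalClosure ({f i} : Set G), a * b = b * a) →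
    Subgroup.lowerCentralSeries (⊤ : Subgroup G) m = ⊥ := by
  intro m
  induction m with
  | zero =>
    intro G _ f hgen _
    have : (⊤ : Subgroup G) = ⊥ := by
      rw [← hgen]
      have : Set.range f = ∅ := Set.range_eq_empty f
      simp [this]
    simpa using this
  | succ m IH =>
    intro G _ f hgen hab
    have step1 : ∀ i : Fin (m + 1),
        Subgroup.lowerCentralSeries (⊤ : Subgroup G) m ≤ Subgroup.normalClosure ({f i} : Set G) := by
      intro i
      set Ni := Subgroup.normalClosure ({f i} : Set G) with hNi
      haveI : Ni.Normal := Subgroup.normalClosure_normal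
      set π := QuotientGroup.mk' Ni with hπ
      have hsurj : Function.Surjective π := QuotientGroup.mk'_surjective Ni
      have hq : Subgroup.lowerCentralSeries (⊤ : Subgroup (G ⧸ Ni)) m = ⊥ := by
        apply IH (G ⧸ Ni) (fun j => π (f (i.succAbove j)))
        · rw [← top_le_iff]
          intro x _
          obtain ⟨y, rfl⟩ := hsurj x
          have hy : y ∈ Subgroup.closure (Set.range f) := hgen ▸ Subgroup.mem_top y
          have hmem : π y ∈ Subgroup.map π (Subgroup.closure (Set.range f)) :=
            Subgroup.mem_map_of_mem π hy
          rw [MonoidHom.map_closure] at hmem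
          have hle : Subgroup.closure (π '' Set.range f) ≤
              Subgroup.closure (Set.range fun j => π (f (i.succAbove j))) := by
            rw [Subgroup.closure_le]
            rintro _ ⟨_, ⟨j, rfl⟩, rfl⟩
            rcases eq_or_ne j i with rfl | hji
            · have h1 : π (f j) = 1 := by
                rw [hπ, QuotientGroup.mk'_apply, QuotientGroup.eq_one_iff]
                exact Subgroup.subset_normalClosure rfl
              rw [h1]; exact Subgroup.one_mem _
            · obtain ⟨k, rfl⟩ := Fin.exists_succAbove_eq hji
              exact Subgroup.subset_closure ⟨k, rfl⟩
          exact hle hmem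
        · intro j a ha b hb
          have hmap : Subgroup.normalClosure ({π (f (i.succAbove j))} : Set (G ⧸ Ni)) =
              (Subgroup.normalClosure ({f (i.succAbove j)} : Set G)).map π := by
            rw [Subgroup.map_normalClosure _ _ hsurj, Set.image_singleton]
          rw [hmap] at ha hb
          obtain ⟨a', ha', rfl⟩ := ha
          obtain ⟨b', hb', rfl⟩ := hb
          rw [← map_mul, ← map_mul, hab _ a' ha' b' hb']
      have hmle : Subgroup.map π (Subgroup.lowerCentralSeries (⊤ : Subgroup G) m) ≤ ⊥ := by
        rw [← hq, Subgroup.map_lowerCentralSeries, Subgroup.map_top_of_surjective π hsurj]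
      intro x hx
      have hx1 := hmle (Subgroup.mem_map_of_mem π hx)
      rw [Subgroup.mem_bot, hπ, QuotientGroup.mk'_apply, QuotientGroup.eq_one_iff] at hx1
      exact hx1
    show ⁅Subgroup.lowerCentralSeries (⊤ : Subgroup G) m, (⊤ : Subgroup G)⁆ = ⊥
    rw [eq_bot_iff, Subgroup.commutator_le]
    intro h hh g _
    rw [Subgroup.mem_bot, commutatorElement_eq_one_iff_commute]
    have hg : g ∈ Subgroup.closure (Set.range f) := hgen ▸ Subgroup.mem_top g
    have hgc : g ∈ Subgroup.centralizer {h} := by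
      refine (Subgroup.closure_le _).mpr ?_ hg
      rintro _ ⟨i, rfl⟩
      rw [SetLike.mem_coe, Subgroup.mem_centralizer_iff]
      rintro y rfl
      exact hab i y (step1 i hh) (f i) (Subgroup.subset_normalClosure rfl)
    exact Subgroup.mem_centralizer_iff.mp hgc h rfl

lemma milnor_aux (m : ℕ) :
    Subgroup.lowerCentralSeries (⊤ : Subgroup (FreeGroup (Fin m) ⧸ Subgroup.normalClosure
      (⋃ i : Fin m, (⁅Subgroup.normalClosure ({FreeGroup.of i} : Set (FreeGroup (Fin m))),
        Subgroup.normalClosure ({FreeGroup.of i} : Set (FreeGroup (Fin m)))⁆ :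
          Subgroup (FreeGroup (Fin m))) : Set (FreeGroup (Fin m))))) m = ⊥ := by
  set F := FreeGroup (Fin m) with hF
  set N : Subgroup F := Subgroup.normalClosure
      (⋃ i : Fin m, (⁅Subgroup.normalClosure ({FreeGroup.of i} : Set F),
        Subgroup.normalClosure ({FreeGroup.of i} : Set F)⁆ : Subgroup F) : Set F) with hN
  haveI : N.Normal := Subgroup.normalClosure_normal
  set π := QuotientGroup.mk' N with hπ
  have hsurj : Function.Surjective π := QuotientGroup.mk'_surjective N
  apply key_nilpotent m (F ⧸ N) (fun i => π (FreeGroup.of i))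
  · rw [← top_le_iff]
    intro x _
    obtain ⟨y, rfl⟩ := hsurj x
    have hy : y ∈ Subgroup.closure (Set.range (FreeGroup.of : Fin m → F)) := by
      rw [FreeGroup.closure_range_of]; exact Subgroup.mem_top y
    have hmem : π y ∈ Subgroup.map π (Subgroup.closure (Set.range FreeGroup.of)) :=
      Subgroup.mem_map_of_mem π hy
    rw [MonoidHom.map_closure] at hmem
    refine (Subgroup.closure_le _).mpr ?_ hmem
    rintro _ ⟨_, ⟨i, rfl⟩, rfl⟩
    exact Subgroup.subset_closure ⟨i, rfl⟩
  · intro i a ha b hb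
    have hmap : Subgroup.normalClosure ({π (FreeGroup.of i)} : Set (F ⧸ N)) =
        (Subgroup.normalClosure ({FreeGroup.of i} : Set F)).map π := by
      rw [Subgroup.map_normalClosure _ _ hsurj, Set.image_singleton]
    rw [hmap] at ha hb
    obtain ⟨a', ha', rfl⟩ := ha
    obtain ⟨b', hb', rfl⟩ := hb
    open scoped commutatorElement in
    have hc : ⁅b'⁻¹, a'⁻¹⁆ ∈ N := Subgroup.subset_normalClosure
      (Set.mem_iUnion.mpr ⟨i, Subgroup.commutator_mem_commutator (inv_mem hb') (inv_mem ha')⟩)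
    rw [← map_mul, ← map_mul, hπ, QuotientGroup.mk'_apply, QuotientGroup.mk'_apply,
      QuotientGroup.eq]
    convert hc using 1
    simp only [commutatorElement_def, mul_inv_rev, inv_inv, mul_assoc]
    exact congrArg (b'⁻¹ * ·) (congrArg (a'⁻¹ * ·)
      (congrArg₂ (· * ·) (inv_inv b').symm (inv_inv a').symm))

/-- Let `F` be the free group on generators `y_1, …, y_{n-1}` (here `m = n-1`)
and let `K_{n-1} = F / ∏_{i=1}^{n-1} [⟨⟨y_i⟩⟩, ⟨⟨y_i⟩⟩]`, where `⟨⟨y_i⟩⟩` is the normal closure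
of `y_i` in `F` (the product of these normal subgroups is normal, so we may take the normal
closure of their union as the kernel).  Then `γ^n(K_{n-1}) = {1}`, i.e. `K_{n-1}` is nilpotent of
class at most `n - 1 = m`; with `γ^{m+1} = lowerCentralSeries _ m` this reads
`lowerCentralSeries K m = ⊥`. -/
theorem milnor_link_group_nilpotent (m : ℕ) :
    letI F := FreeGroup (Fin m)
    letI N : Subgroup F := Subgroup.normalClosure
      (⋃ i : Fin m, (⁅Subgroup.normalClosure ({FreeGroup.of i} : Set F),
        Subgroup.normalClosure ({FreeGroup.of i} : Set F)⁆ : Subgroup F) : Set F)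
    Subgroup.lowerCentralSeries (⊤ : Subgroup (F ⧸ N)) m = ⊥ :=
  milnor_aux m
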